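/- For every even integer r with 0 ≤ r ≤ n, the trace of the generalized Newton transformation satisfies Tr(T_r) = (n − r) S_r. -/

import Mathlib

open scoped BigOperators

noncomputable section

/-- The generalized Kronecker symbol `δ^{i₁…i_r}_{j₁…j_r}`:
the determinant of the `r × r` matrix whose `(a,b)` entry is `δ^{i_a}_{j_b}`. -/
def gKron {n r : ℕ} (i j : Fin r → Fin n) : ℝ :=
  Matrix.det (Matrix.of fun a b : Fin r => if i a = j b then (1 : ℝ) else 0)

/-- The pairing `⟨B_{i₁}^{j₁}, B_{i₂}^{j₂}⟩ = Σ_α A^α{}_{i₁}^{j₁} A^α{}_{i₂}^{j₂}`.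
Here `A α` is a matrix with the convention that `A^α{}_i^j` (row `j`, column `i`)
is `A α j i`. -/
def pairing {n l : ℕ} (A : Fin l → Matrix (Fin n) (Fin n) ℝ)
    (i₁ j₁ i₂ j₂ : Fin n) : ℝ :=
  ∑ α : Fin l, A α j₁ i₁ * A α j₂ i₂

/-- The product `⟨B_{i₁}^{j₁},B_{i₂}^{j₂}⟩ ⋯ ⟨B_{i_{2s-1}}^{j_{2s-1}},B_{i_{2s}}^{j_{2s}}⟩`. -/
def pairProd {n l : ℕ} (A : Fin l → Matrix (Fin n) (Fin n) ℝ) (s : ℕ)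
    (i j : Fin (2 * s) → Fin n) : ℝ :=
  ∏ t : Fin s,
    pairing A (i ⟨2 * t.1, by omega⟩) (j ⟨2 * t.1, by omega⟩)
      (i ⟨2 * t.1 + 1, by omega⟩) (j ⟨2 * t.1 + 1, by omega⟩)

/-- The `r`-th mean curvature `S_r` for `r = 2s`. -/
def meanCurv {n l : ℕ} (A : Fin l → Matrix (Fin n) (Fin n) ℝ) (s : ℕ) : ℝ :=
  (1 / (Nat.factorial (2 * s) : ℝ)) *
    ∑ i : Fin (2 * s) → Fin n, ∑ j : Fin (2 * s) → Fin n,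
      gKron i j * pairProd A s i j

/-- The generalized Newton transformation `T_r` for `r = 2s`; the entry
`(T_r)^p_u` is in row `p`, column `u`. -/
def newton {n l : ℕ} (A : Fin l → Matrix (Fin n) (Fin n) ℝ) (s : ℕ) :
    Matrix (Fin n) (Fin n) ℝ :=
  Matrix.of fun p u =>
    (1 / (Nat.factorial (2 * s) : ℝ)) *
      ∑ i : Fin (2 * s) → Fin n, ∑ j : Fin (2 * s) → Fin n,
        gKron (Fin.snoc i p) (Fin.snoc j u) * pairProd A s i j

/-- The transformation `T_q^α` for odd `q = 2s + 1`; the entry `(T_q^α)^p_u`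
is in row `p`, column `u`. -/
def newtonOdd {n l : ℕ} (A : Fin l → Matrix (Fin n) (Fin n) ℝ) (s : ℕ) (α : Fin l) :
    Matrix (Fin n) (Fin n) ℝ :=
  Matrix.of fun p u =>
    (1 / (Nat.factorial (2 * s + 1) : ℝ)) *
      ∑ i : Fin (2 * s) → Fin n, ∑ j : Fin (2 * s) → Fin n, ∑ a : Fin n, ∑ b : Fin n,
        gKron (Fin.snoc (Fin.snoc i a) p) (Fin.snoc (Fin.snoc j b) u)
          * pairProd A s i j * A α b a

/-- Rank one perturbation of the determinant, expanded by multilinearity in rows. -/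
lemma det_add_rank_one {m : ℕ} (A : Matrix (Fin m) (Fin m) ℝ) (u w : Fin m → ℝ) :
    (Matrix.of fun a b => A a b + u a * w b).det
      = A.det + ∑ a, u a * (A.updateRow a w).det := by
  classical
  set f := (Matrix.detRowAlternating : (Fin m → ℝ) [⋀^Fin m]→ₗ[ℝ] ℝ) with hf
  set B : Matrix (Fin m) (Fin m) ℝ := Matrix.of fun a b => u a * w b with hB
  have hBa : ∀ a, B a = u a • w := by
    intro a; funext b; simp [hB, Matrix.of_apply, smul_eq_mul]
  have h1 : (Matrix.of fun a b => A a b + u a * w b) = A + B := by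
    ext a b; simp [hB]
  have h2 : (A + B).det = f (A + B) := rfl
  have h3 : f (A + B) = ∑ s : Finset (Fin m), f (s.piecewise A B) :=
    f.toMultilinearMap.map_add_univ A B
  -- terms with at least two rows from B vanish
  have hvan : ∀ s : Finset (Fin m), s ≠ Finset.univ →
      (∀ a : Fin m, s ≠ ({a}ᶜ : Finset (Fin m))) → f (s.piecewise A B) = 0 := by
    intro s hs1 hs2
    have hcard : 1 < sᶜ.card := by
      rcases Nat.lt_or_ge 1 sᶜ.card with h | h
      · exact h
      · exfalso
        interval_cases h' : sᶜ.card
        · exact hs1 (by simpa using (Finset.card_eq_zero.mp h' : sᶜ = ∅))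
        · obtain ⟨a, ha⟩ := Finset.card_eq_one.mp h'
          exact hs2 a (by rw [← compl_compl s, ha])
    obtain ⟨a, ha, a', ha', hne⟩ := Finset.one_lt_card.mp hcard
    rw [Finset.mem_compl] at ha ha'
    set M := s.piecewise A B with hM
    have hMa : M a = u a • w := by
      show (if a ∈ s then A a else B a) = u a • w; rw [if_neg ha, hBa]
    have hMa' : M a' = u a' • w := by
      show (if a' ∈ s then A a' else B a') = u a' • w; rw [if_neg ha', hBa]
    have e1 : f M = u a • f (Function.update M a w) := by
      conv_lhs => rw [← Function.update_eq_self a M, hMa]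
      exact f.toMultilinearMap.map_update_smul M a (u a) w
    have e2 : f (Function.update M a w)
        = u a' • f (Function.update (Function.update M a w) a' w) := by
      conv_lhs => rw [← Function.update_eq_self a' (Function.update M a w),
        Function.update_of_ne hne.symm _ _, hMa']
      exact (f.toMultilinearMap.map_update_smul _ a' (u a') w)
    have e3 : f (Function.update (Function.update M a w) a' w) = 0 := by
      apply f.map_eq_zero_of_eq _ _ hne.symm
      simp [Function.update_of_ne hne]
    rw [e1, e2, e3]; simp
  -- only univ and complements of singletons survive
  set T : Finset (Finset (Fin m)) :=
    insert Finset.univ (Finset.univ.image fun a : Fin m => ({a}ᶜ : Finset (Fin m))) with hT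
  have hsum : ∑ s : Finset (Fin m), f (s.piecewise A B)
      = ∑ s ∈ T, f (s.piecewise A B) := by
    refine (Finset.sum_subset (Finset.subset_univ T) ?_).symm
    intro s _ hsT
    apply hvan
    · intro h; exact hsT (by rw [hT, h]; exact Finset.mem_insert_self _ _)
    · intro a h
      refine hsT ?_
      rw [hT, h]
      exact Finset.mem_insert_of_mem (Finset.mem_image_of_mem _ (Finset.mem_univ a))
  have hnotmem : Finset.univ ∉ (Finset.univ.image fun a : Fin m => ({a}ᶜ : Finset (Fin m))) := by
    simp only [Finset.mem_image, Finset.mem_univ, true_and, not_exists]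
    intro a h
    have := Finset.mem_univ a
    rw [← h] at this
    simp at this
  have hinj : Function.Injective fun a : Fin m => ({a}ᶜ : Finset (Fin m)) := by
    intro a b h
    have := compl_injective h
    exact Finset.singleton_injective this
  have hTval : ∑ s ∈ T, f (s.piecewise A B)
      = f (Finset.univ.piecewise A B)
        + ∑ a : Fin m, f ((({a}ᶜ : Finset (Fin m))).piecewise A B) := by
    rw [hT, Finset.sum_insert hnotmem, Finset.sum_image (fun a _ b _ h => hinj h)]
  have huniv : f (Finset.univ.piecewise A B) = A.det := by
    show f (fun i => if i ∈ Finset.univ then A i else B i) = A.det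
    simp only [Finset.mem_univ, if_true]; rfl
  have hsing : ∀ a : Fin m, f ((({a}ᶜ : Finset (Fin m))).piecewise A B)
      = u a * (A.updateRow a w).det := by
    intro a
    have hpw : ({a}ᶜ : Finset (Fin m)).piecewise A B = Function.update A a (u a • w) := by
      funext i; by_cases h : i = a
      · subst h
        show (if i ∈ ({i}ᶜ : Finset (Fin m)) then A i else B i) = _
        rw [if_neg (by simp), hBa]; exact (Function.update_self (f := A) i _).symm
      · show (if i ∈ ({a}ᶜ : Finset (Fin m)) then A i else B i) = _
        rw [if_pos (by simp [h])]; exact (Function.update_of_ne h _ _).symm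
    rw [hpw]
    have : Function.update A a (u a • w) = Function.update A a (u a • w) := rfl
    calc f (Function.update A a (u a • w))
        = u a • f (Function.update A a w) := f.toMultilinearMap.map_update_smul A a (u a) w
      _ = u a * (A.updateRow a w).det := by
          rw [smul_eq_mul]; congr 1
  rw [h1, h2, h3, hsum, hTval, huniv]
  congr 1
  exact Finset.sum_congr rfl fun a _ => hsing a

lemma key_contraction {n r : ℕ} (i j : Fin r → Fin n) :
    ∑ p : Fin n, gKron (Fin.snoc i p) (Fin.snoc j p) = ((n : ℝ) - (r : ℝ)) * gKron i j := by
  classical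
  set K : Matrix (Fin r) (Fin r) ℝ :=
    Matrix.of fun a b : Fin r => if i a = j b then (1 : ℝ) else 0 with hK
  have hgk : gKron i j = K.det := rfl
  have hp : ∀ p : Fin n, gKron (Fin.snoc i p) (Fin.snoc j p)
      = K.det + ∑ a, (-(if i a = p then (1:ℝ) else 0))
          * (K.updateRow a fun b => if p = j b then (1:ℝ) else 0).det := by
    intro p
    set u : Fin r → ℝ := fun a => if i a = p then (1:ℝ) else 0 with hu
    set w : Fin r → ℝ := fun b => if p = j b then (1:ℝ) else 0 with hw
    set Mp : Matrix (Fin (r+1)) (Fin (r+1)) ℝ :=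
      Matrix.of fun a b : Fin (r+1) => if (Fin.snoc i p : Fin (r+1) → Fin n) a = (Fin.snoc j p : Fin (r+1) → Fin n) b then (1:ℝ) else 0 with hMp
    have h0 : gKron (Fin.snoc i p) (Fin.snoc j p) = Mp.det := rfl
    have hsub : Mp.submatrix finSumFinEquiv finSumFinEquiv
        = Matrix.fromBlocks K (Matrix.of fun a (_ : Fin 1) => u a)
            (Matrix.of fun (_ : Fin 1) b => w b) 1 := by
      have hcast : ∀ q : Fin r, (Fin.castAdd 1 q : Fin (r+1)) = Fin.castSucc q := fun _ => rfl
      have hnat : ∀ b : Fin 1, (Fin.natAdd r b : Fin (r+1)) = Fin.last r := by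
        intro b
        have : b = 0 := Subsingleton.elim _ _
        subst this
        ext
        simp [Fin.natAdd, Fin.last]
      ext a b
      cases a with
      | inl a =>
        cases b with
        | inl b =>
          simp [Matrix.submatrix_apply, finSumFinEquiv_apply_left, hcast,
            Fin.snoc_castSucc, Matrix.fromBlocks_apply₁₁, hMp, hK]
        | inr b =>
          simp [Matrix.submatrix_apply, finSumFinEquiv_apply_left, finSumFinEquiv_apply_right,
            hcast, hnat, Fin.snoc_castSucc, Fin.snoc_last, hMp, hu]
      | inr a =>
        cases b with
        | inl b =>
          simp [Matrix.submatrix_apply, finSumFinEquiv_apply_left, finSumFinEquiv_apply_right,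
            hcast, hnat, Fin.snoc_castSucc, Fin.snoc_last, hMp, hw]
        | inr b =>
          have ha : a = 0 := Subsingleton.elim _ _
          have hb : b = 0 := Subsingleton.elim _ _
          subst ha; subst hb
          simp [Matrix.submatrix_apply, finSumFinEquiv_apply_right, hnat,
            Fin.snoc_last, hMp, Matrix.one_apply_eq]
    have h1 : Mp.det = (Matrix.fromBlocks K (Matrix.of fun a (_ : Fin 1) => u a)
            (Matrix.of fun (_ : Fin 1) b => w b) 1).det := by
      rw [← hsub, Matrix.det_submatrix_equiv_self]
    have h2 : (Matrix.fromBlocks K (Matrix.of fun a (_ : Fin 1) => u a)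
            (Matrix.of fun (_ : Fin 1) b => w b) 1).det
        = (Matrix.of fun a b => K a b + (-(u a)) * w b).det := by
      rw [Matrix.det_fromBlocks_one₂₂]
      congr 1
      ext a b
      simp only [Matrix.sub_apply, Matrix.mul_apply, Fin.sum_univ_one, Matrix.of_apply]
      ring
    rw [h0, h1, h2, det_add_rank_one K (fun a => -(u a)) w]
  -- now sum over p
  rw [Finset.sum_congr rfl fun p _ => hp p]
  rw [Finset.sum_add_distrib, Finset.sum_const, Finset.card_univ, Fintype.card_fin]
  have hinner : ∀ a : Fin r,
      ∑ p : Fin n, (if i a = p then (1:ℝ) else 0)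
        * (K.updateRow a fun b => if p = j b then (1:ℝ) else 0).det = K.det := by
    intro a
    have hstep : ∀ p : Fin n,
        (if i a = p then (1:ℝ) else 0)
          * (K.updateRow a fun b => if p = j b then (1:ℝ) else 0).det
        = (K.updateRow a ((if i a = p then (1:ℝ) else 0)
            • fun b => if p = j b then (1:ℝ) else 0)).det := by
      intro p
      rw [Matrix.det_updateRow_smul]
    rw [Finset.sum_congr rfl fun p _ => hstep p]
    have hms : ∑ p : Fin n, (K.updateRow a ((if i a = p then (1:ℝ) else 0)
          • fun b => if p = j b then (1:ℝ) else 0)).det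
        = (K.updateRow a (∑ p : Fin n, (if i a = p then (1:ℝ) else 0)
          • fun b => if p = j b then (1:ℝ) else 0)).det :=
      (MultilinearMap.map_update_sum
        (Matrix.detRowAlternating (R := ℝ) (n := Fin r)).toMultilinearMap
        Finset.univ a (fun p : Fin n => (if i a = p then (1:ℝ) else 0)
          • fun b => if p = j b then (1:ℝ) else 0) K).symm
    rw [hms]
    have hrow : (∑ p : Fin n, (if i a = p then (1:ℝ) else 0)
        • fun b => if p = j b then (1:ℝ) else 0) = K a := by
      funext b
      simp only [Finset.sum_apply, Pi.smul_apply, smul_eq_mul]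
      rw [Finset.sum_eq_single (i a)]
      · simp [hK]
      · intro p _ hpne
        simp [Ne.symm hpne]
      · simp
    rw [hrow, Matrix.updateRow_eq_self]
  have : ∑ p : Fin n, ∑ a : Fin r, (-(if i a = p then (1:ℝ) else 0))
      * (K.updateRow a fun b => if p = j b then (1:ℝ) else 0).det
      = -(r : ℝ) * K.det := by
    rw [Finset.sum_comm]
    have hneg : ∀ a : Fin r, ∑ p : Fin n, (-(if i a = p then (1:ℝ) else 0))
        * (K.updateRow a fun b => if p = j b then (1:ℝ) else 0).det = -K.det := by
      intro a
      simp only [neg_mul]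
      rw [Finset.sum_neg_distrib, hinner a]
    rw [Finset.sum_congr rfl fun a _ => hneg a]
    simp [mul_comm]
  rw [this, hgk]
  ring


theorem stmt2 (n l : ℕ) (hn : 1 ≤ n) (hl : 1 ≤ l)
    (A : Fin l → Matrix (Fin n) (Fin n) ℝ) (r s : ℕ) (hr : r = 2 * s) (hrn : r ≤ n) :
    (newton A s).trace = ((n : ℝ) - (r : ℝ)) * meanCurv A s := by
  classical
  subst hr
  have htr : (newton A s).trace = ∑ p : Fin n, newton A s p p := rfl
  rw [htr]
  simp only [newton, Matrix.of_apply]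
  rw [← Finset.mul_sum]
  have hswap : ∑ p : Fin n, ∑ i : Fin (2 * s) → Fin n, ∑ j : Fin (2 * s) → Fin n,
        gKron (Fin.snoc i p) (Fin.snoc j p) * pairProd A s i j
      = ∑ i : Fin (2 * s) → Fin n, ∑ j : Fin (2 * s) → Fin n,
        ((n : ℝ) - ((2 * s : ℕ) : ℝ)) * (gKron i j * pairProd A s i j) := by
    rw [Finset.sum_comm]
    refine Finset.sum_congr rfl fun i _ => ?_
    rw [Finset.sum_comm]
    refine Finset.sum_congr rfl fun j _ => ?_
    rw [← Finset.sum_mul, key_contraction i j, mul_assoc]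
  rw [hswap, meanCurv]
  simp only [← Finset.mul_sum]
  ring
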